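/- The formulas σ(R)|n₁,n₂⟩ = q^{2(n₁+n₂)}|n₁,n₂⟩, σ(a)|n₁,n₂⟩ = q^{n₁+2n₂-1}(1-q^{2n₁})^{1/2}|n₁-1,n₂⟩, σ(b)|n₁,n₂⟩ = q^{n₁+n₂}(1-q^{2(n₂+1)})^{1/2}|n₁,n₂+1⟩ define a unitary *-representation of Σ⁴_q on ℓ²(ℕ)⊗ℓ²(ℕ): the operators σ(a), σ(b), σ(R) are bounded and satisfy all defining relations of Σ⁴_q. -/

import Mathlib

open ContinuousLinearMap

section SigmaRepAux

open scoped InnerProductSpace ComplexConjugate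

variable {ι H : Type*} [NormedAddCommGroup H] [InnerProductSpace ℂ H] [CompleteSpace H]

private lemma sigmaRep_exists_shift_op (e : HilbertBasis ι ℂ H) (d : ι → ℝ) (g : ι → ι) (C : ℝ)
    (hC0 : 0 ≤ C) (hC : ∀ m, |d m| ≤ C)
    (hg : ∀ m m', d m ≠ 0 → d m' ≠ 0 → g m = g m' → m = m') :
    ∃ T : H →L[ℂ] H, ∀ (x : H) (m : ι), e.repr (T x) m = (d m : ℂ) * e.repr x (g m) := by
  classical
  have h2 : (0:ℝ) < (2 : ENNReal).toReal := by norm_num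
  have htr : (2 : ENNReal).toReal = ((2:ℕ):ℝ) := by norm_num
  have key : ∀ (y : lp (fun _ : ι => ℂ) 2) (s : Finset ι),
      ∑ m ∈ s, ‖(d m : ℂ) * y (g m)‖ ^ (2 : ENNReal).toReal
        ≤ (C * ‖y‖) ^ (2 : ENNReal).toReal := by
    intro y s
    rw [htr]
    simp only [Real.rpow_natCast]
    set s' : Finset ι := s.filter (fun m => d m ≠ 0) with hs'
    have h1 : ∑ m ∈ s, ‖(d m : ℂ) * y (g m)‖ ^ (2:ℕ)
        = ∑ m ∈ s', ‖(d m : ℂ) * y (g m)‖ ^ (2:ℕ) := by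
      refine (Finset.sum_filter_of_ne ?_).symm
      intro m hm hne hd
      exact hne (by simp [hd])
    have h2' : ∑ m ∈ s', ‖(d m : ℂ) * y (g m)‖ ^ (2:ℕ)
        ≤ C ^ 2 * ∑ m ∈ s', ‖y (g m)‖ ^ (2:ℕ) := by
      rw [Finset.mul_sum]
      refine Finset.sum_le_sum fun m hm => ?_
      rw [norm_mul, Complex.norm_real, mul_pow]
      have := pow_le_pow_left₀ (abs_nonneg (d m)) (hC m) 2
      exact mul_le_mul_of_nonneg_right this (by positivity)
    have hinj : ∀ x ∈ s', ∀ y ∈ s', g x = g y → x = y := by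
      intro a ha b hb hab
      exact hg a b (Finset.mem_filter.mp ha).2 (Finset.mem_filter.mp hb).2 hab
    have h3 : ∑ n ∈ s'.image g, ‖y n‖ ^ (2:ℕ) = ∑ m ∈ s', ‖y (g m)‖ ^ (2:ℕ) := by
      rw [Finset.sum_image hinj]
    have h4 : ∑ n ∈ s'.image g, ‖y n‖ ^ (2:ℕ) ≤ ‖y‖ ^ (2:ℕ) := by
      have := lp.sum_rpow_le_norm_rpow h2 y (s'.image g)
      rw [htr] at this
      simpa only [Real.rpow_natCast] using this
    calc ∑ m ∈ s, ‖(d m : ℂ) * y (g m)‖ ^ (2:ℕ)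
        ≤ C ^ 2 * ∑ n ∈ s'.image g, ‖y n‖ ^ (2:ℕ) := by rw [h1, h3]; exact h2'
      _ ≤ C ^ 2 * ‖y‖ ^ (2:ℕ) := by
          exact mul_le_mul_of_nonneg_left h4 (by positivity)
      _ = (C * ‖y‖) ^ (2:ℕ) := by ring
  have hmem : ∀ y : lp (fun _ : ι => ℂ) 2, Memℓp (fun m => (d m : ℂ) * y (g m)) 2 :=
    fun y => memℓp_gen' (key y)
  let F : lp (fun _ : ι => ℂ) 2 →ₗ[ℂ] lp (fun _ : ι => ℂ) 2 :=
  { toFun := fun y => ⟨fun m => (d m : ℂ) * y (g m), hmem y⟩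
    map_add' := by
      intro y z
      apply lp.ext
      funext m
      simp only [lp.coeFn_add, Pi.add_apply]
      show (d m : ℂ) * (y + z) (g m) = (d m : ℂ) * y (g m) + (d m : ℂ) * z (g m)
      rw [lp.coeFn_add]
      simp [mul_add]
    map_smul' := by
      intro c y
      apply lp.ext
      funext m
      simp only [lp.coeFn_smul, Pi.smul_apply, RingHom.id_apply]
      show (d m : ℂ) * (c • y) (g m) = c • ((d m : ℂ) * y (g m))
      rw [lp.coeFn_smul]
      simp [smul_eq_mul]
      ring }
  have Fbound : ∀ y, ‖F y‖ ≤ C * ‖y‖ := fun y =>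
    lp.norm_le_of_forall_sum_le h2 (mul_nonneg hC0 (norm_nonneg y)) (key y)
  let T : H →L[ℂ] H := LinearMap.mkContinuous
    ((e.repr.symm.toLinearEquiv.toLinearMap).comp
      (F.comp e.repr.toLinearEquiv.toLinearMap)) C
    (fun x => by
      show ‖e.repr.symm (F (e.repr x))‖ ≤ C * ‖x‖
      rw [LinearIsometryEquiv.norm_map]
      calc ‖F (e.repr x)‖ ≤ C * ‖e.repr x‖ := Fbound _
        _ = C * ‖x‖ := by rw [LinearIsometryEquiv.norm_map])
  refine ⟨T, fun x m => ?_⟩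
  show e.repr (e.repr.symm (F (e.repr x))) m = _
  rw [LinearIsometryEquiv.apply_symm_apply]
  rfl

private lemma sigmaRep_ext_basis (e : HilbertBasis ι ℂ H) {T S : H →L[ℂ] H}
    (h : ∀ n, T (e n) = S (e n)) : T = S := by
  have hd : Dense ((Submodule.span ℂ (Set.range e) : Submodule ℂ H) : Set H) :=
    Submodule.dense_iff_topologicalClosure_eq_top.mpr e.dense_span
  refine ContinuousLinearMap.ext_on hd ?_
  rintro x ⟨n, rfl⟩
  exact h n

private lemma sigmaRep_basis_action [DecidableEq ι] (e : HilbertBasis ι ℂ H) (T : H →L[ℂ] H)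
    (d : ι → ℝ) (g : ι → ι)
    (hT : ∀ (x : H) (m : ι), e.repr (T x) m = (d m : ℂ) * e.repr x (g m))
    (n fn : ι) (c : ℝ)
    (h : ∀ m : ι, (if g m = n then (d m : ℂ) else 0) = (if m = fn then (c : ℂ) else 0)) :
    T (e n) = (c : ℂ) • e fn := by
  apply e.repr.injective
  apply lp.ext
  funext m
  have L : e.repr (T (e n)) m = (if g m = n then (d m : ℂ) else 0) := by
    rw [hT, e.repr_self]
    by_cases hgm : g m = n
    · rw [hgm, lp.single_apply_self, if_pos rfl, mul_one]
    · rw [lp.single_apply_ne _ _ _ hgm, if_neg hgm, mul_zero]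
  have R : e.repr ((c : ℂ) • e fn) m = (if m = fn then (c : ℂ) else 0) := by
    rw [map_smul, lp.coeFn_smul, Pi.smul_apply, e.repr_self, smul_eq_mul]
    by_cases hm : m = fn
    · rw [hm, lp.single_apply_self, if_pos rfl, mul_one]
    · rw [lp.single_apply_ne _ _ _ hm, if_neg hm, mul_zero]
  show e.repr (T (e n)) m = e.repr ((c : ℂ) • e fn) m
  rw [L, R, h m]

private lemma sigmaRep_adjoint_eq (e : HilbertBasis ι ℂ H) (T S : H →L[ℂ] H)
    (h : ∀ m n : ι, ⟪e m, S (e n)⟫_ℂ = ⟪T (e m), e n⟫_ℂ) :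
    ContinuousLinearMap.adjoint T = S := by
  refine sigmaRep_ext_basis e fun n => ?_
  apply e.repr.injective
  apply lp.ext
  funext m
  show e.repr (ContinuousLinearMap.adjoint T (e n)) m = e.repr (S (e n)) m
  rw [e.repr_apply_apply, e.repr_apply_apply, ContinuousLinearMap.adjoint_inner_right, ← h m n]

private lemma sigmaRep_inner_basis [DecidableEq ι] (e : HilbertBasis ι ℂ H) (i j : ι) :
    ⟪e i, e j⟫_ℂ = if i = j then 1 else 0 := orthonormal_iff_ite.mp e.orthonormal i j

end SigmaRepAux

set_option maxHeartbeats 2000000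

theorem sigma_representation_exists
    (q : ℝ) (hq0 : 0 < q) (hq1 : q < 1)
    (H : Type*) [NormedAddCommGroup H] [InnerProductSpace ℂ H] [CompleteSpace H]
    (e : HilbertBasis (ℕ × ℕ) ℂ H) :
    ∃ σR σa σb : H →L[ℂ] H,
      (∀ n₁ n₂ : ℕ, σR (e (n₁, n₂)) = ((q : ℂ) ^ (2 * (n₁ + n₂))) • e (n₁, n₂)) ∧
      (∀ n₁ n₂ : ℕ, σa (e (n₁, n₂)) =
        ((q : ℂ) ^ (n₁ + 2 * n₂) * (q : ℂ)⁻¹ *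
          (Real.sqrt (1 - q ^ (2 * n₁)) : ℂ)) • e (n₁ - 1, n₂)) ∧
      (∀ n₁ n₂ : ℕ, σb (e (n₁, n₂)) =
        ((q : ℂ) ^ (n₁ + n₂) *
          (Real.sqrt (1 - q ^ (2 * (n₂ + 1))) : ℂ)) • e (n₁, n₂ + 1)) ∧
      adjoint σR = σR ∧
      σR * σa = ((q : ℂ) ^ 2)⁻¹ • (σa * σR) ∧
      σR * σb = ((q : ℂ) ^ 2) • (σb * σR) ∧
      σa * σb = ((q : ℂ) ^ 3) • (σb * σa) ∧
      σa * adjoint σb = ((q : ℂ))⁻¹ • (adjoint σb * σa) ∧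
      σa * adjoint σa + ((q : ℂ) ^ 2) • (σb * adjoint σb) =
        σR * (1 - ((q : ℂ) ^ 2) • σR) ∧
      σa * adjoint σa = ((q : ℂ) ^ 2) • (adjoint σa * σa) +
        ((1 : ℂ) - (q : ℂ) ^ 2) • (σR * σR) ∧
      adjoint σb * σb = ((q : ℂ) ^ 4) • (σb * adjoint σb) +
        ((1 : ℂ) - (q : ℂ) ^ 2) • σR := by
  classical
  have hqne : q ≠ 0 := ne_of_gt hq0
  have hq1' : q ≤ 1 := le_of_lt hq1
  have hpow_le_one : ∀ k : ℕ, q ^ k ≤ 1 := fun k => pow_le_one₀ hq0.le hq1'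
  have hpow_pos : ∀ k : ℕ, 0 < q ^ k := fun k => pow_pos hq0 k
  have hsub_nonneg : ∀ k : ℕ, 0 ≤ 1 - q ^ k := fun k => by linarith [hpow_le_one k]
  have hsqrt_le_one : ∀ k : ℕ, Real.sqrt (1 - q ^ k) ≤ 1 := fun k =>
    Real.sqrt_le_one.mpr (by linarith [hpow_pos k])
  have hinv_one : (1 : ℝ) ≤ q⁻¹ := (one_le_inv₀ hq0).mpr hq1'
  have hinv_nonneg : (0 : ℝ) ≤ q⁻¹ := by positivity
  have hsq : ∀ k : ℕ, Real.sqrt (1 - q ^ k) ^ 2 = 1 - q ^ k := fun k =>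
    Real.sq_sqrt (hsub_nonneg k)
  -- bounds
  have key1 : ∀ a b : ℕ, |q ^ a * Real.sqrt (1 - q ^ b)| ≤ q⁻¹ := by
    intro a b
    rw [abs_of_nonneg (by positivity)]
    nlinarith [hpow_le_one a, hsqrt_le_one b, Real.sqrt_nonneg (1 - q ^ b),
      hpow_pos a, hpow_pos a]
  have key2 : ∀ a b : ℕ, |q ^ a * q⁻¹ * Real.sqrt (1 - q ^ b)| ≤ q⁻¹ := by
    intro a b
    rw [abs_of_nonneg (by positivity)]
    have h1 := mul_le_mul_of_nonneg_left (hsqrt_le_one b)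
      (by positivity : (0:ℝ) ≤ q ^ a * q⁻¹)
    have h2 := mul_le_mul_of_nonneg_right (hpow_le_one a) hinv_nonneg
    linarith
  -- the five operators
  obtain ⟨σR, hσR⟩ := sigmaRep_exists_shift_op e
    (fun m => q ^ (2 * (m.1 + m.2))) id q⁻¹ hinv_nonneg
    (fun m => by
      rw [abs_of_nonneg (hpow_pos _).le]
      exact le_trans (hpow_le_one _) hinv_one)
    (fun m m' _ _ h => h)
  obtain ⟨σa, hσa⟩ := sigmaRep_exists_shift_op e
    (fun m => q ^ (m.1 + 1 + 2 * m.2) * q⁻¹ * Real.sqrt (1 - q ^ (2 * (m.1 + 1))))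
    (fun m => (m.1 + 1, m.2)) q⁻¹ hinv_nonneg
    (fun m => key2 _ _)
    (fun m m' _ _ h => by
      obtain ⟨h1, h2⟩ := Prod.mk.injEq .. ▸ h
      exact Prod.ext (by omega) h2)
  obtain ⟨σb, hσb⟩ := sigmaRep_exists_shift_op e
    (fun m => if m.2 = 0 then 0 else q ^ (m.1 + (m.2 - 1)) * Real.sqrt (1 - q ^ (2 * m.2)))
    (fun m => (m.1, m.2 - 1)) q⁻¹ hinv_nonneg
    (fun m => by
      split_ifs
      · simpa using hinv_nonneg
      · exact key1 _ _)
    (fun m m' hm hm' h => by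
      have h1 : m.2 ≠ 0 := fun h0 => hm (by simp [h0])
      have h2 : m'.2 ≠ 0 := fun h0 => hm' (by simp [h0])
      obtain ⟨ha, hb⟩ := Prod.mk.injEq .. ▸ h
      exact Prod.ext ha (by omega))
  obtain ⟨σat, hσat⟩ := sigmaRep_exists_shift_op e
    (fun m => if m.1 = 0 then 0 else q ^ ((m.1 - 1) + 2 * m.2) * Real.sqrt (1 - q ^ (2 * m.1)))
    (fun m => (m.1 - 1, m.2)) q⁻¹ hinv_nonneg
    (fun m => by
      split_ifs
      · simpa using hinv_nonneg
      · exact key1 _ _)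
    (fun m m' hm hm' h => by
      have h1 : m.1 ≠ 0 := fun h0 => hm (by simp [h0])
      have h2 : m'.1 ≠ 0 := fun h0 => hm' (by simp [h0])
      obtain ⟨ha, hb⟩ := Prod.mk.injEq .. ▸ h
      exact Prod.ext (by omega) hb)
  obtain ⟨σbt, hσbt⟩ := sigmaRep_exists_shift_op e
    (fun m => q ^ (m.1 + (m.2 + 1)) * q⁻¹ * Real.sqrt (1 - q ^ (2 * (m.2 + 1))))
    (fun m => (m.1, m.2 + 1)) q⁻¹ hinv_nonneg
    (fun m => key2 _ _)
    (fun m m' _ _ h => by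
      obtain ⟨h1, h2⟩ := Prod.mk.injEq .. ▸ h
      exact Prod.ext h1 (by omega))
  -- basis actions
  have hRb : ∀ n : ℕ × ℕ, σR (e n) =
      ((q ^ (2 * (n.1 + n.2)) : ℝ) : ℂ) • e n := by
    intro n
    refine sigmaRep_basis_action e σR _ _ hσR n n _ fun m => ?_
    by_cases h : m = n
    · subst h; simp
    · simp [h]
  have hab : ∀ n : ℕ × ℕ, σa (e n) =
      ((q ^ (n.1 + 2 * n.2) * q⁻¹ * Real.sqrt (1 - q ^ (2 * n.1)) : ℝ) : ℂ) • e (n.1 - 1, n.2) := by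
    intro n
    refine sigmaRep_basis_action e σa _ _ hσa n (n.1 - 1, n.2) _ fun m => ?_
    obtain ⟨m1, m2⟩ := m
    obtain ⟨n1, n2⟩ := n
    dsimp only
    match n1 with
    | 0 =>
      rw [if_neg (by simp)]
      by_cases h2 : ((m1 : ℕ), m2) = (0 - 1, n2)
      · rw [if_pos h2]
        norm_num
      · rw [if_neg h2]
    | (k+1) =>
      by_cases h2 : ((m1 : ℕ), m2) = (k + 1 - 1, n2)
      · have hm : m1 = k ∧ m2 = n2 := by simpa [Prod.ext_iff] using h2
        obtain ⟨rfl, rfl⟩ := hm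
        rw [if_pos h2, if_pos rfl]
      · have h1 : ¬ ((m1 + 1 : ℕ), m2) = (k + 1, n2) := by
          simp only [Prod.mk.injEq] at h2 ⊢
          omega
        rw [if_neg h1, if_neg h2]
  have hbb : ∀ n : ℕ × ℕ, σb (e n) =
      ((q ^ (n.1 + n.2) * Real.sqrt (1 - q ^ (2 * (n.2 + 1))) : ℝ) : ℂ) • e (n.1, n.2 + 1) := by
    intro n
    refine sigmaRep_basis_action e σb _ _ hσb n (n.1, n.2 + 1) _ fun m => ?_
    obtain ⟨m1, m2⟩ := m
    obtain ⟨n1, n2⟩ := n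
    dsimp only
    match m2 with
    | 0 =>
      simp [Prod.ext_iff]
    | (j+1) =>
      by_cases h2 : ((m1 : ℕ), j + 1 - 1) = (n1, n2)
      · have hm : m1 = n1 ∧ j = n2 := by simpa [Prod.ext_iff] using h2
        obtain ⟨rfl, rfl⟩ := hm
        rw [if_pos h2, if_pos rfl, if_neg (by omega)]
        norm_num
      · have h1 : ¬ ((m1 : ℕ), j + 1) = (n1, n2 + 1) := by
          simp only [Prod.mk.injEq] at h2 ⊢
          omega
        rw [if_neg h2, if_neg h1]
  have hatb : ∀ n : ℕ × ℕ, σat (e n) =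
      ((q ^ (n.1 + 2 * n.2) * Real.sqrt (1 - q ^ (2 * (n.1 + 1))) : ℝ) : ℂ) • e (n.1 + 1, n.2) := by
    intro n
    refine sigmaRep_basis_action e σat _ _ hσat n (n.1 + 1, n.2) _ fun m => ?_
    obtain ⟨m1, m2⟩ := m
    obtain ⟨n1, n2⟩ := n
    dsimp only
    match m1 with
    | 0 =>
      simp [Prod.ext_iff]
    | (k+1) =>
      by_cases h2 : ((k + 1 - 1 : ℕ), m2) = (n1, n2)
      · have hm : k = n1 ∧ m2 = n2 := by simpa [Prod.ext_iff] using h2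
        obtain ⟨rfl, rfl⟩ := hm
        rw [if_pos h2, if_pos rfl, if_neg (by omega)]
        norm_num
      · have h1 : ¬ ((k + 1 : ℕ), m2) = (n1 + 1, n2) := by
          simp only [Prod.mk.injEq] at h2 ⊢
          omega
        rw [if_neg h2, if_neg h1]
  have hbtb : ∀ n : ℕ × ℕ, σbt (e n) =
      ((q ^ (n.1 + n.2) * q⁻¹ * Real.sqrt (1 - q ^ (2 * n.2)) : ℝ) : ℂ) • e (n.1, n.2 - 1) := by
    intro n
    refine sigmaRep_basis_action e σbt _ _ hσbt n (n.1, n.2 - 1) _ fun m => ?_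
    obtain ⟨m1, m2⟩ := m
    obtain ⟨n1, n2⟩ := n
    dsimp only
    match n2 with
    | 0 =>
      rw [if_neg (by simp [Prod.ext_iff])]
      by_cases h2 : ((m1 : ℕ), m2) = (n1, 0 - 1)
      · rw [if_pos h2]
        norm_num
      · rw [if_neg h2]
    | (j+1) =>
      by_cases h2 : ((m1 : ℕ), m2) = (n1, j + 1 - 1)
      · have hm : m1 = n1 ∧ m2 = j := by simpa [Prod.ext_iff] using h2
        obtain ⟨rfl, rfl⟩ := hm
        rw [if_pos h2, if_pos rfl]
      · have h1 : ¬ ((m1 : ℕ), m2 + 1) = (n1, j + 1) := by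
          simp only [Prod.mk.injEq] at h2 ⊢
          omega
        rw [if_neg h1, if_neg h2]
  have hqC : (q : ℂ) ≠ 0 := Complex.ofReal_ne_zero.mpr hqne
  have hsqC : ∀ k : ℕ, ((Real.sqrt (1 - q ^ k) : ℝ) : ℂ) ^ 2 = 1 - (q : ℂ) ^ k := fun k => by
    rw [← Complex.ofReal_pow, hsq k]
    push_cast
    ring
  have hs0 : Real.sqrt (1 - q ^ (0 : ℕ)) = 0 := by norm_num
  have hsqC2 : ∀ k : ℕ, ((Real.sqrt (1 - q ^ 2 * q ^ (k * 2)) : ℝ) : ℂ) ^ 2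
      = 1 - (q : ℂ) ^ 2 * (q : ℂ) ^ (k * 2) := fun k => by
    have harg : (1 : ℝ) - q ^ 2 * q ^ (k * 2) = 1 - q ^ (2 * (k + 1)) := by ring
    rw [harg, ← Complex.ofReal_pow, hsq (2 * (k + 1))]
    push_cast
    ring
  have hsqC4 : ∀ k : ℕ, ((Real.sqrt (1 - q ^ 4 * q ^ (k * 2)) : ℝ) : ℂ) ^ 2
      = 1 - (q : ℂ) ^ 4 * (q : ℂ) ^ (k * 2) := fun k => by
    have harg : (1 : ℝ) - q ^ 4 * q ^ (k * 2) = 1 - q ^ (2 * (k + 2)) := by ring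
    rw [harg, ← Complex.ofReal_pow, hsq (2 * (k + 2))]
    push_cast
    ring
  -- adjoints
  have hadjR : adjoint σR = σR := by
    refine sigmaRep_adjoint_eq e σR σR fun m n => ?_
    rw [hRb n, hRb m, inner_smul_right, inner_smul_left, sigmaRep_inner_basis,
      Complex.conj_ofReal]
    by_cases h : m = n
    · subst h; rfl
    · simp [h]
  have hadja : adjoint σa = σat := by
    refine sigmaRep_adjoint_eq e σa σat fun m n => ?_
    obtain ⟨m1, m2⟩ := m
    obtain ⟨n1, n2⟩ := n
    rw [hatb, hab, inner_smul_right, inner_smul_left, sigmaRep_inner_basis,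
      sigmaRep_inner_basis, Complex.conj_ofReal]
    dsimp only
    match m1 with
    | 0 => simp [Prod.ext_iff, hs0]
    | (k+1) =>
      by_cases h : k = n1 ∧ m2 = n2
      · obtain ⟨rfl, rfl⟩ := h
        rw [if_pos (by simp), if_pos (by simp), mul_one, mul_one]
        norm_cast
        field_simp
        ring
      · rw [if_neg (by simp only [Prod.mk.injEq] at h ⊢; omega),
          if_neg (by simp only [Prod.mk.injEq] at h ⊢; omega), mul_zero, mul_zero]
  have hadjb : adjoint σb = σbt := by
    refine sigmaRep_adjoint_eq e σb σbt fun m n => ?_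
    obtain ⟨m1, m2⟩ := m
    obtain ⟨n1, n2⟩ := n
    rw [hbtb, hbb, inner_smul_right, inner_smul_left, sigmaRep_inner_basis,
      sigmaRep_inner_basis, Complex.conj_ofReal]
    dsimp only
    match n2 with
    | 0 => simp [Prod.ext_iff, hs0]
    | (j+1) =>
      by_cases h : m1 = n1 ∧ m2 = j
      · obtain ⟨rfl, rfl⟩ := h
        rw [if_pos (by simp), if_pos (by simp), mul_one, mul_one]
        norm_cast
        field_simp
        ring
      · rw [if_neg (by simp only [Prod.mk.injEq] at h ⊢; omega),
          if_neg (by simp only [Prod.mk.injEq] at h ⊢; omega), mul_zero, mul_zero]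
  refine ⟨σR, σa, σb, ?_, ?_, ?_, hadjR, ?_, ?_, ?_, ?_, ?_, ?_, ?_⟩
  · intro n1 n2
    rw [hRb ⟨n1, n2⟩]
    push_cast
    rfl
  · intro n1 n2
    rw [hab ⟨n1, n2⟩]
    push_cast
    rfl
  · intro n1 n2
    rw [hbb ⟨n1, n2⟩]
    push_cast
    rfl
  · -- σR σa = q⁻² (σa σR)
    refine sigmaRep_ext_basis e fun n => ?_
    obtain ⟨n1, n2⟩ := n
    simp only [ContinuousLinearMap.mul_apply, ContinuousLinearMap.smul_apply, hab, hRb,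
      map_smul, smul_smul]
    match n1 with
    | 0 => simp [hs0]
    | (k+1) =>
      simp only [Nat.add_sub_cancel]
      match_scalars
      push_cast
      field_simp
      ring
  · -- σR σb = q² (σb σR)
    refine sigmaRep_ext_basis e fun n => ?_
    obtain ⟨n1, n2⟩ := n
    simp only [ContinuousLinearMap.mul_apply, ContinuousLinearMap.smul_apply, hbb, hRb,
      map_smul, smul_smul]
    match_scalars
    push_cast
    field_simp
    ring
  · -- σa σb = q³ (σb σa)
    refine sigmaRep_ext_basis e fun n => ?_
    obtain ⟨n1, n2⟩ := n
    simp only [ContinuousLinearMap.mul_apply, ContinuousLinearMap.smul_apply, hab, hbb,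
      map_smul, smul_smul]
    match n1 with
    | 0 => simp [hs0]
    | (k+1) =>
      simp only [Nat.add_sub_cancel]
      match_scalars
      push_cast
      field_simp
      ring
  · -- σa σb† = q⁻¹ (σb† σa)
    rw [hadjb]
    refine sigmaRep_ext_basis e fun n => ?_
    obtain ⟨n1, n2⟩ := n
    simp only [ContinuousLinearMap.mul_apply, ContinuousLinearMap.smul_apply, hab, hbtb,
      map_smul, smul_smul]
    match n1, n2 with
    | 0, n2 => simp [hs0]
    | (k+1), 0 => simp [hs0]
    | (k+1), (j+1) =>
      simp only [Nat.add_sub_cancel]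
      match_scalars
      push_cast
      field_simp
      ring
  · -- σa σa† + q² σb σb† = σR (1 - q² σR)
    rw [hadja, hadjb]
    refine sigmaRep_ext_basis e fun n => ?_
    obtain ⟨n1, n2⟩ := n
    simp only [ContinuousLinearMap.mul_apply, ContinuousLinearMap.smul_apply,
      ContinuousLinearMap.add_apply, ContinuousLinearMap.sub_apply, ContinuousLinearMap.one_apply,
      hab, hbb, hatb, hbtb, hRb, map_smul, map_sub, smul_smul]
    match n2 with
    | 0 =>
      simp only [Nat.add_sub_cancel, hs0]
      match_scalars <;>
      · push_cast
        field_simp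
        try ring_nf
        try simp only [hsqC, hsqC2, hsqC4]
        try ring
    | (j+1) =>
      simp only [Nat.add_sub_cancel]
      match_scalars <;>
      · push_cast
        field_simp
        try ring_nf
        try simp only [hsqC, hsqC2, hsqC4]
        try ring
  · -- σa σa† = q² σa† σa + (1-q²) σR σR
    rw [hadja]
    refine sigmaRep_ext_basis e fun n => ?_
    obtain ⟨n1, n2⟩ := n
    simp only [ContinuousLinearMap.mul_apply, ContinuousLinearMap.smul_apply,
      ContinuousLinearMap.add_apply, hab, hatb, hRb, map_smul, smul_smul]
    match n1 with
    | 0 =>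
      simp only [Nat.add_sub_cancel, hs0]
      match_scalars <;>
      · push_cast
        field_simp
        try ring_nf
        try simp only [hsqC, hsqC2, hsqC4]
        try ring
    | (k+1) =>
      simp only [Nat.add_sub_cancel]
      match_scalars <;>
      · push_cast
        field_simp
        try ring_nf
        try simp only [hsqC, hsqC2, hsqC4]
        try ring
  · -- σb† σb = q⁴ σb σb† + (1-q²) σR
    rw [hadjb]
    refine sigmaRep_ext_basis e fun n => ?_
    obtain ⟨n1, n2⟩ := n
    simp only [ContinuousLinearMap.mul_apply, ContinuousLinearMap.smul_apply,
      ContinuousLinearMap.add_apply, hbb, hbtb, hRb, map_smul, smul_smul]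
    match n2 with
    | 0 =>
      simp only [Nat.add_sub_cancel, hs0]
      match_scalars <;>
      · push_cast
        field_simp
        try ring_nf
        try simp only [hsqC, hsqC2, hsqC4]
        try ring
    | (j+1) =>
      simp only [Nat.add_sub_cancel]
      match_scalars <;>
      · push_cast
        field_simp
        try ring_nf
        try simp only [hsqC, hsqC2, hsqC4]
        try ring
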